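/- Let k be a positive-definite kernel on 𝒳, let {S_j}_{j∈J} be a partition of 𝒳 into pairwise disjoint nonempty subsets, and let X̄ be a finite tuple of pairwise distinct points of 𝒳 with K(X̄,X̄) invertible. Define k₂(x,x') = k(x,x') − k(x,X̄)·K(X̄,X̄)⁻¹·k(X̄,x') if x and x' lie in the same cell S_j, and k₂(x,x') = 0 otherwise. Then k₂ is a positive-definite kernel on 𝒳. -/
import Mathlib


open scoped BigOperators

/-- A symmetric function `k` is a positive-definite kernel if for every finite list of
pairwise distinct points `x₁,…,xₘ` and all real coefficients `α₁,…,αₘ`,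
`∑ᵢⱼ αᵢ αⱼ k(xᵢ,xⱼ) ≥ 0`. -/
def PosDefKernel {𝒳 : Type*} (k : 𝒳 → 𝒳 → ℝ) : Prop :=
  ∀ (m : ℕ) (x : Fin m → 𝒳), Function.Injective x →
    ∀ α : Fin m → ℝ, 0 ≤ ∑ i, ∑ j, α i * α j * k (x i) (x j)

/-- The Nyström kernel based on landmark points `Xb`:
`k_Nys(x,x') = k(x,Xb)·K(Xb,Xb)⁻¹·k(Xb,x')`. -/
noncomputable def nystromKernel {𝒳 : Type*} (k : 𝒳 → 𝒳 → ℝ) {r : ℕ} (Xb : Fin r → 𝒳)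
    (x x' : 𝒳) : ℝ :=
  ∑ i, ∑ j, k x (Xb i) *
    ((Matrix.of fun a b => k (Xb a) (Xb b) : Matrix (Fin r) (Fin r) ℝ)⁻¹ i j) * k (Xb j) x'

open Classical in
/-- The local Schur-complement kernel `k₂`: the Schur-complement kernel
`k(x,x') − k(x,Xb)·K(Xb,Xb)⁻¹·k(Xb,x')` within a cell of the partition `S`, and `0`
across cells. -/
noncomputable def localSchurKernel {𝒳 J : Type*} (k : 𝒳 → 𝒳 → ℝ) (S : J → Set 𝒳)
    {r : ℕ} (Xb : Fin r → 𝒳) (x x' : 𝒳) : ℝ :=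
  if ∃ j, x ∈ S j ∧ x' ∈ S j then k x x' - nystromKernel k Xb x x' else 0


/-- A PosDefKernel-style inequality holds for arbitrary (not necessarily injective) tuples. -/
lemma posdef_sum {𝒳 : Type*} (k : 𝒳 → 𝒳 → ℝ)
    (hk : ∀ (m : ℕ) (x : Fin m → 𝒳), Function.Injective x →
      ∀ α : Fin m → ℝ, 0 ≤ ∑ i, ∑ j, α i * α j * k (x i) (x j))
    (m : ℕ) (x : Fin m → 𝒳) (α : Fin m → ℝ) :
    0 ≤ ∑ i, ∑ j, α i * α j * k (x i) (x j) := by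
  classical
  set T := Finset.image x Finset.univ with hT
  let e : {a // a ∈ T} ≃ Fin T.card := T.equivFin
  set y : Fin T.card → 𝒳 := fun t => (e.symm t : 𝒳) with hy'
  have hy : Function.Injective y := fun a b h => e.symm.injective (Subtype.ext h)
  set F : Fin m → Fin T.card :=
    fun i => e ⟨x i, Finset.mem_image_of_mem x (Finset.mem_univ i)⟩ with hF'
  have hxF : ∀ i, x i = y (F i) := fun i => by simp [hy', hF']
  set β : Fin T.card → ℝ := fun t => ∑ i ∈ Finset.univ.filter (fun i => F i = t), α i with hβ'
  have key : ∑ i, ∑ j, α i * α j * k (x i) (x j) = ∑ t, ∑ s, β t * β s * k (y t) (y s) := by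
    have h1 : ∀ t s, β t * β s * k (y t) (y s)
        = ∑ i ∈ Finset.univ.filter (fun i => F i = t),
            ∑ j ∈ Finset.univ.filter (fun j => F j = s), α i * α j * k (x i) (x j) := by
      intro t s
      rw [hβ', Finset.sum_mul_sum, Finset.sum_mul]
      refine Finset.sum_congr rfl fun i hi => ?_
      rw [Finset.sum_mul]
      refine Finset.sum_congr rfl fun j hj => ?_
      have hit : F i = t := (Finset.mem_filter.mp hi).2
      have hjs : F j = s := (Finset.mem_filter.mp hj).2
      rw [hxF i, hxF j, hit, hjs]
    symm
    calc ∑ t, ∑ s, β t * β s * k (y t) (y s)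
        = ∑ t, ∑ s, ∑ i ∈ Finset.univ.filter (fun i => F i = t),
            ∑ j ∈ Finset.univ.filter (fun j => F j = s), α i * α j * k (x i) (x j) := by
          exact Finset.sum_congr rfl fun t _ => Finset.sum_congr rfl fun s _ => h1 t s
      _ = ∑ t, ∑ i ∈ Finset.univ.filter (fun i => F i = t),
            ∑ s, ∑ j ∈ Finset.univ.filter (fun j => F j = s), α i * α j * k (x i) (x j) := by
          exact Finset.sum_congr rfl fun t _ => Finset.sum_comm
      _ = ∑ t, ∑ i ∈ Finset.univ.filter (fun i => F i = t),
            ∑ j, α i * α j * k (x i) (x j) := by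
          refine Finset.sum_congr rfl fun t _ => Finset.sum_congr rfl fun i _ => ?_
          exact Finset.sum_fiberwise_of_maps_to (fun j _ => Finset.mem_univ (F j)) _
      _ = ∑ i, ∑ j, α i * α j * k (x i) (x j) := by
          exact Finset.sum_fiberwise_of_maps_to (fun i _ => Finset.mem_univ (F i)) _
  rw [key]
  exact hk _ y hy β

lemma sum_sum_mul {ι κ : Type*} [Fintype ι] [Fintype κ] (f : ι → κ → ℝ) (y : ℝ) :
    ∑ a, ∑ b, f a b * y = (∑ a, ∑ b, f a b) * y := by
  rw [Finset.sum_mul]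
  exact Finset.sum_congr rfl fun a _ => (Finset.sum_mul ..).symm

lemma mul_sum_sum {ι κ : Type*} [Fintype ι] [Fintype κ] (u : ℝ) (f : ι → ℝ) (g : κ → ℝ) :
    (u * ∑ i, f i) * ∑ j, g j = ∑ i, ∑ j, u * f i * g j := by
  calc (u * ∑ i, f i) * ∑ j, g j
      = ∑ j, (u * ∑ i, f i) * g j := by rw [Finset.mul_sum]
    _ = ∑ j, ∑ i, u * f i * g j := Finset.sum_congr rfl fun j _ => by
        rw [mul_comm u (∑ i, f i), Finset.sum_mul, Finset.sum_mul]
        exact Finset.sum_congr rfl fun i _ => by ring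
    _ = ∑ i, ∑ j, u * f i * g j := Finset.sum_comm

lemma swap4 {ι κ : Type*} [Fintype ι] [Fintype κ] (f : ι → ι → κ → κ → ℝ) :
    (∑ a, ∑ b, ∑ p, ∑ q, f a b p q) = ∑ p, ∑ q, ∑ a, ∑ b, f a b p q := by
  calc (∑ a, ∑ b, ∑ p, ∑ q, f a b p q)
      = ∑ a, ∑ p, ∑ b, ∑ q, f a b p q :=
        Finset.sum_congr rfl fun a _ => Finset.sum_comm
    _ = ∑ p, ∑ a, ∑ b, ∑ q, f a b p q := Finset.sum_comm
    _ = ∑ p, ∑ a, ∑ q, ∑ b, f a b p q :=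
        Finset.sum_congr rfl fun p _ => Finset.sum_congr rfl fun a _ => Finset.sum_comm
    _ = ∑ p, ∑ q, ∑ a, ∑ b, f a b p q :=
        Finset.sum_congr rfl fun p _ => Finset.sum_comm

open Matrix in
lemma schur_sum {𝒳 : Type*} (k : 𝒳 → 𝒳 → ℝ)
    (hsym : ∀ x y, k x y = k y x)
    (hk : ∀ (m : ℕ) (x : Fin m → 𝒳), Function.Injective x →
      ∀ α : Fin m → ℝ, 0 ≤ ∑ i, ∑ j, α i * α j * k (x i) (x j))
    (r : ℕ) (Xb : Fin r → 𝒳)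
    (hKinv : IsUnit (Matrix.of fun a b => k (Xb a) (Xb b) : Matrix (Fin r) (Fin r) ℝ).det)
    (m : ℕ) (x : Fin m → 𝒳) (α : Fin m → ℝ) :
    0 ≤ ∑ i, ∑ j, α i * α j * (k (x i) (x j) - nystromKernel k Xb (x i) (x j)) := by
  classical
  set K : Matrix (Fin r) (Fin r) ℝ := Matrix.of fun a b => k (Xb a) (Xb b) with hK
  set Kinv : Matrix (Fin r) (Fin r) ℝ := K⁻¹ with hKi
  have hKT : Kᵀ = K := by
    ext a b; simp [hK, Matrix.transpose_apply, hsym]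
  have hinvT : ∀ a b, Kinv a b = Kinv b a := by
    intro a b
    have h : Kinvᵀ = Kinv := by
      rw [hKi, Matrix.transpose_nonsing_inv, hKT]
    calc Kinv a b = Kinvᵀ b a := rfl
      _ = Kinv b a := by rw [h]
  have hKKinv : K * Kinv = 1 := Matrix.mul_nonsing_inv K hKinv
  set c : Fin r → ℝ := fun a => ∑ i, α i * k (x i) (Xb a) with hc
  set γ : Fin r → ℝ := fun a => -∑ b, Kinv a b * c b with hγ
  set R : ℝ := ∑ a, ∑ b, Kinv a b * c a * c b with hR
  set z : Fin (m + r) → 𝒳 := Fin.append x Xb with hz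
  set β : Fin (m + r) → ℝ := Fin.append α γ with hβ
  have H := posdef_sum k hk (m + r) z β
  have hsplit : ∑ i, ∑ j, β i * β j * k (z i) (z j)
      = (∑ i, ∑ j, α i * α j * k (x i) (x j))
        + (∑ i, ∑ b, α i * γ b * k (x i) (Xb b))
        + ((∑ a, ∑ j, γ a * α j * k (Xb a) (x j))
        + ∑ a, ∑ b, γ a * γ b * k (Xb a) (Xb b)) := by
    rw [Fin.sum_univ_add]
    simp only [Fin.sum_univ_add, hz, hβ, Fin.append_left, Fin.append_right,
      Finset.sum_add_distrib]
  have hγc : ∀ a, γ a * c a = -∑ b, Kinv a b * c a * c b := by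
    intro a
    simp only [hγ, neg_mul, neg_inj, Finset.sum_mul]
    exact Finset.sum_congr rfl fun b _ => by ring
  have hγcR : ∑ a, γ a * c a = -R := by
    calc ∑ a, γ a * c a = ∑ a, -∑ b, Kinv a b * c a * c b :=
          Finset.sum_congr rfl fun a _ => hγc a
      _ = -R := by rw [← Finset.sum_neg_distrib]
  have E1 : ∑ i, ∑ b, α i * γ b * k (x i) (Xb b) = -R := by
    rw [Finset.sum_comm]
    rw [show ∑ b, ∑ i, α i * γ b * k (x i) (Xb b) = ∑ b, γ b * c b from
      Finset.sum_congr rfl fun b _ => by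
        rw [hc]; rw [Finset.mul_sum]
        exact Finset.sum_congr rfl fun i _ => by ring]
    exact hγcR
  have E2 : ∑ a, ∑ j, γ a * α j * k (Xb a) (x j) = -R := by
    rw [show ∑ a, ∑ j, γ a * α j * k (Xb a) (x j) = ∑ a, γ a * c a from
      Finset.sum_congr rfl fun a _ => by
        rw [hc]; rw [Finset.mul_sum]
        exact Finset.sum_congr rfl fun j _ => by rw [hsym (Xb a) (x j)]; ring]
    exact hγcR
  have contract : ∀ p q : Fin r, (∑ a, ∑ b, Kinv a p * Kinv b q * K a b) = Kinv p q := by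
    intro p q
    have h1 : ∀ a, ∑ b, Kinv a p * Kinv b q * K a b = Kinv a p * (K * Kinv) a q := by
      intro a
      rw [Matrix.mul_apply, Finset.mul_sum]
      exact Finset.sum_congr rfl fun b _ => by ring
    rw [Finset.sum_congr rfl fun a _ => h1 a, hKKinv]
    simp only [Matrix.one_apply]
    rw [Finset.sum_congr rfl (fun a (_ : a ∈ Finset.univ) =>
      (by split_ifs with h <;> simp [h] : Kinv a p * (if a = q then (1:ℝ) else 0)
        = if a = q then Kinv a p else 0))]
    rw [Finset.sum_ite_eq' Finset.univ q (fun a => Kinv a p)]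
    simp [hinvT]
  have E3 : ∑ a, ∑ b, γ a * γ b * k (Xb a) (Xb b) = R := by
    have step : ∀ a b, γ a * γ b * k (Xb a) (Xb b)
        = ∑ p, ∑ q, Kinv a p * Kinv b q * K a b * (c p * c q) := by
      intro a b
      simp only [hγ]
      rw [neg_mul_neg, Finset.sum_mul_sum, Finset.sum_mul]
      refine Finset.sum_congr rfl fun p _ => ?_
      rw [Finset.sum_mul]
      refine Finset.sum_congr rfl fun q _ => ?_
      simp only [hK, Matrix.of_apply]
      ring
    calc ∑ a, ∑ b, γ a * γ b * k (Xb a) (Xb b)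
        = ∑ a, ∑ b, ∑ p, ∑ q, Kinv a p * Kinv b q * K a b * (c p * c q) :=
          Finset.sum_congr rfl fun a _ => Finset.sum_congr rfl fun b _ => step a b
      _ = ∑ p, ∑ q, ∑ a, ∑ b, Kinv a p * Kinv b q * K a b * (c p * c q) := swap4 _
      _ = ∑ p, ∑ q, (∑ a, ∑ b, Kinv a p * Kinv b q * K a b) * (c p * c q) := by
          refine Finset.sum_congr rfl fun p _ => Finset.sum_congr rfl fun q _ => ?_
          exact sum_sum_mul (fun a b => Kinv a p * Kinv b q * K a b) (c p * c q)
      _ = ∑ p, ∑ q, Kinv p q * (c p * c q) :=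
          Finset.sum_congr rfl fun p _ => Finset.sum_congr rfl fun q _ => by
            rw [contract p q]
      _ = R := by
          rw [hR]
          exact Finset.sum_congr rfl fun p _ => Finset.sum_congr rfl fun q _ => by ring
  have E4 : ∑ i, ∑ j, α i * α j * nystromKernel k Xb (x i) (x j) = R := by
    have step : ∀ i j, α i * α j * nystromKernel k Xb (x i) (x j)
        = ∑ a, ∑ b, Kinv a b * (α i * k (x i) (Xb a)) * (α j * k (x j) (Xb b)) := by
      intro i j
      rw [nystromKernel, Finset.mul_sum]
      refine Finset.sum_congr rfl fun a _ => ?_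
      rw [Finset.mul_sum]
      refine Finset.sum_congr rfl fun b _ => ?_
      rw [hsym (Xb b) (x j), ← hK, ← hKi]
      ring
    calc ∑ i, ∑ j, α i * α j * nystromKernel k Xb (x i) (x j)
        = ∑ i, ∑ j, ∑ a, ∑ b, Kinv a b * (α i * k (x i) (Xb a)) * (α j * k (x j) (Xb b)) :=
          Finset.sum_congr rfl fun i _ => Finset.sum_congr rfl fun j _ => step i j
      _ = ∑ a, ∑ b, ∑ i, ∑ j, Kinv a b * (α i * k (x i) (Xb a)) * (α j * k (x j) (Xb b)) :=
          swap4 _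
      _ = ∑ a, ∑ b, Kinv a b * c a * c b := by
          refine Finset.sum_congr rfl fun a _ => Finset.sum_congr rfl fun b _ => ?_
          exact (mul_sum_sum (Kinv a b) (fun i => α i * k (x i) (Xb a))
            (fun j => α j * k (x j) (Xb b))).symm
      _ = R := hR.symm
  have goal_eq : ∑ i, ∑ j, α i * α j * (k (x i) (x j) - nystromKernel k Xb (x i) (x j))
      = (∑ i, ∑ j, α i * α j * k (x i) (x j)) - R := by
    rw [← E4, ← Finset.sum_sub_distrib]
    refine Finset.sum_congr rfl fun i _ => ?_
    rw [← Finset.sum_sub_distrib]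
    exact Finset.sum_congr rfl fun j _ => by ring
  rw [goal_eq]
  rw [hsplit, E1, E2, E3] at H
  linarith


/-- if `k` is a positive-definite kernel, `S` is a partition of `𝒳` into pairwise
disjoint nonempty cells, and `Xb` is a tuple of pairwise distinct landmark points with
`K(Xb,Xb)` invertible, then `k₂` is a positive-definite kernel. -/
theorem localSchurKernel_posDef
    {𝒳 J : Type*} (k : 𝒳 → 𝒳 → ℝ)
    (hsym : ∀ x y, k x y = k y x)
    (hk : PosDefKernel k)
    (S : J → Set 𝒳)
    (hSne : ∀ j, (S j).Nonempty)
    (hSdisj : ∀ j j', j ≠ j' → Disjoint (S j) (S j'))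
    (hScover : (⋃ j, S j) = Set.univ)
    (r : ℕ) (Xb : Fin r → 𝒳) (hinj : Function.Injective Xb)
    (hKinv : IsUnit (Matrix.of fun a b => k (Xb a) (Xb b) : Matrix (Fin r) (Fin r) ℝ).det) :
    PosDefKernel (localSchurKernel k S Xb) := by
  intro m x hxinj α
  classical
  -- cell assignment
  have hcell : ∀ i : Fin m, ∃ j, x i ∈ S j := by
    intro i
    have : x i ∈ ⋃ j, S j := hScover ▸ Set.mem_univ (x i)
    exact Set.mem_iUnion.mp this
  choose c hc using hcell
  have huniq : ∀ (a : 𝒳) (j j' : J), a ∈ S j → a ∈ S j' → j = j' := by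
    intro a j j' hj hj'
    by_contra hne
    exact (hSdisj j j' hne).le_bot ⟨hj, hj'⟩ |>.elim
  have hval : ∀ i i' : Fin m, localSchurKernel k S Xb (x i) (x i')
      = if c i = c i' then k (x i) (x i') - nystromKernel k Xb (x i) (x i') else 0 := by
    intro i i'
    rw [localSchurKernel]
    by_cases h : ∃ j, x i ∈ S j ∧ x i' ∈ S j
    · obtain ⟨j, hji, hji'⟩ := h
      have h1 : c i = j := huniq (x i) (c i) j (hc i) hji
      have h2 : c i' = j := huniq (x i') (c i') j (hc i') hji'
      rw [if_pos ⟨j, hji, hji'⟩, if_pos (h1.trans h2.symm)]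
    · have : ¬ c i = c i' := fun hcc => h ⟨c i, hc i, hcc ▸ hc i'⟩
      rw [if_neg h, if_neg this]
  set s := Finset.image c Finset.univ with hs
  have hterm : ∀ i i' : Fin m, α i * α i' * localSchurKernel k S Xb (x i) (x i')
      = ∑ t ∈ s, (if c i = t then α i else 0) * (if c i' = t then α i' else 0)
          * (k (x i) (x i') - nystromKernel k Xb (x i) (x i')) := by
    intro i i'
    rw [hval i i']
    by_cases h : c i = c i'
    · rw [if_pos h]
      rw [Finset.sum_congr rfl (fun t (_ : t ∈ s) =>
        (by
          by_cases ht : t = c i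
          · rw [if_pos ht.symm, if_pos (ht ▸ h).symm, if_pos ht]
          · rw [if_neg (fun hh => ht hh.symm), zero_mul, zero_mul, if_neg ht]
          : (if c i = t then α i else 0) * (if c i' = t then α i' else 0)
            * (k (x i) (x i') - nystromKernel k Xb (x i) (x i'))
          = if t = c i then α i * α i' * (k (x i) (x i') - nystromKernel k Xb (x i) (x i'))
            else 0))]
      rw [Finset.sum_ite_eq' s (c i)]
      rw [if_pos (Finset.mem_image_of_mem c (Finset.mem_univ i))]
    · rw [if_neg h, mul_zero]
      symm
      refine Finset.sum_eq_zero fun t _ => ?_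
      by_cases hti : c i = t
      · rw [if_neg (fun hh : c i' = t => h (hti.trans hh.symm)), mul_zero, zero_mul]
      · rw [if_neg hti, zero_mul, zero_mul]
  calc (0:ℝ) ≤ ∑ t ∈ s, ∑ i, ∑ i', (if c i = t then α i else 0) * (if c i' = t then α i' else 0)
          * (k (x i) (x i') - nystromKernel k Xb (x i) (x i')) := by
        refine Finset.sum_nonneg fun t _ => ?_
        exact schur_sum k hsym hk r Xb hKinv m x (fun i => if c i = t then α i else 0)
    _ = ∑ i, ∑ i', ∑ t ∈ s, (if c i = t then α i else 0) * (if c i' = t then α i' else 0)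
          * (k (x i) (x i') - nystromKernel k Xb (x i) (x i')) := by
        rw [Finset.sum_comm]
        refine Finset.sum_congr rfl fun i _ => Finset.sum_comm
    _ = ∑ i, ∑ i', α i * α i' * localSchurKernel k S Xb (x i) (x i') :=
        Finset.sum_congr rfl fun i _ => Finset.sum_congr rfl fun i' _ => (hterm i i').symm
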